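/- For any unit vector α ∈ ℝ³ and any θ ∈ ℝ, set η := cos(θ/2) and ε := sin(θ/2)·α. If η ≠ 0, then the matrix E at the Rodrigues matrix admits the quaternion representation E(R(α,θ)) = (1/|η|)·(η²·I + η·ε^×). -/

import Mathlib

open Matrix

noncomputable section

/-- The cross (hat) map: `x^×` with `x^× y = x × y`. -/
def cross3 (x : Fin 3 → ℝ) : Matrix (Fin 3) (Fin 3) ℝ :=
  !![0, -x 2, x 1; x 2, 0, -x 0; -x 1, x 0, 0]

/-- The vee map: `A∨ = (A₃₂, A₁₃, A₂₁)`. -/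
def vee3 (A : Matrix (Fin 3) (Fin 3) ℝ) : Fin 3 → ℝ :=
  ![A 2 1, A 0 2, A 1 0]

/-- The Rodrigues matrix `R(α,θ) = I + sin θ · α^× + (1-cos θ) · α^×α^×`. -/
def rod (α : Fin 3 → ℝ) (θ : ℝ) : Matrix (Fin 3) (Fin 3) ℝ :=
  1 + Real.sin θ • cross3 α + (1 - Real.cos θ) • (cross3 α * cross3 α)

/-- The error vector `ψ(R) = ½(R - Rᵀ)∨`. -/
def psi3 (R : Matrix (Fin 3) (Fin 3) ℝ) : Fin 3 → ℝ :=
  (1 / 2 : ℝ) • vee3 (R - Rᵀ)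

/-- The generalized error vector `e_R(R) = (1/√(1+tr R)) (R - Rᵀ)∨`. -/
def eR (R : Matrix (Fin 3) (Fin 3) ℝ) : Fin 3 → ℝ :=
  (1 / Real.sqrt (1 + R.trace)) • vee3 (R - Rᵀ)

/-- `E_c(R) = ½((tr R)·I - Rᵀ)`. -/
def Ec (R : Matrix (Fin 3) (Fin 3) ℝ) : Matrix (Fin 3) (Fin 3) ℝ :=
  (1 / 2 : ℝ) • (R.trace • (1 : Matrix (Fin 3) (Fin 3) ℝ) - Rᵀ)

/-- `E(R) = (1/√(1+tr R))(2E_c(R) + ½ e_R e_Rᵀ)`. -/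
def Emat (R : Matrix (Fin 3) (Fin 3) ℝ) : Matrix (Fin 3) (Fin 3) ℝ :=
  (1 / Real.sqrt (1 + R.trace)) •
    ((2 : ℝ) • Ec R + (1 / 2 : ℝ) • vecMulVec (eR R) (eR R))

set_option maxHeartbeats 1000000 in
/-- quaternion representation of `E` at the Rodrigues matrix. -/
theorem Emat_rodrigues_quat (α : Fin 3 → ℝ)
    (hα : α 0 ^ 2 + α 1 ^ 2 + α 2 ^ 2 = 1) (θ : ℝ)
    (η : ℝ) (ε : Fin 3 → ℝ)
    (hη : η = Real.cos (θ / 2)) (hε : ε = Real.sin (θ / 2) • α) (hηne : η ≠ 0) :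
    Emat (rod α θ) =
      (1 / |η|) • (η ^ 2 • (1 : Matrix (Fin 3) (Fin 3) ℝ) + η • cross3 ε) := by
  subst hη hε
  obtain ⟨s, hs⟩ : ∃ x : ℝ, Real.sin (θ / 2) = x := ⟨_, rfl⟩
  obtain ⟨c, hc⟩ : ∃ x : ℝ, Real.cos (θ / 2) = x := ⟨_, rfl⟩
  rw [hc] at hηne
  rw [hc, hs]
  have hpy : s ^ 2 = 1 - c ^ 2 := by
    have := Real.sin_sq_add_cos_sq (θ / 2); rw [hs, hc] at this; linarith
  have hc2 : Real.cos θ = 2 * c ^ 2 - 1 := by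
    rw [show θ = 2 * (θ / 2) by ring, Real.cos_two_mul, hc]
  have hs2 : Real.sin θ = 2 * s * c := by
    rw [show θ = 2 * (θ / 2) by ring, Real.sin_two_mul, hs, hc]
  have habs : |c| ≠ 0 := abs_ne_zero.2 hηne
  have habs2 : |c| ^ 2 = c ^ 2 := sq_abs c
  have htr : (rod α θ).trace = 1 + 2 * Real.cos θ := by
    simp [Matrix.trace, Matrix.diag, rod, cross3, Fin.sum_univ_three, Matrix.mul_apply,
      Matrix.one_apply]
    linear_combination (2 * Real.cos θ - 2) * hα
  have hsq : Real.sqrt (1 + (rod α θ).trace) = 2 * |c| := by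
    rw [htr, hc2, show (1 + (1 + 2 * (2 * c ^ 2 - 1)) : ℝ) = (2 * c) ^ 2 by ring,
      Real.sqrt_sq_eq_abs, abs_mul]
    norm_num
  have heR : eR (rod α θ) = (2 * s * c / |c|) • α := by
    funext i
    simp only [eR, hsq]
    fin_cases i <;>
      simp [vee3, rod, cross3, Matrix.mul_apply, Fin.sum_univ_three, Matrix.vecHead,
        Matrix.vecTail, Matrix.transpose_apply, Matrix.one_apply, hs2, hc2] <;>
      field_simp <;> ring
  have houter : vecMulVec (eR (rod α θ)) (eR (rod α θ)) = (4 * s ^ 2) • vecMulVec α α := by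
    rw [heR]
    ext i j
    simp [vecMulVec]
    field_simp
    linear_combination (-(s ^ 2 * α i * α j * 4)) * habs2
  have hkey : (2 : ℝ) • Ec (rod α θ) + (1 / 2 : ℝ) • ((4 * s ^ 2) • vecMulVec α α) =
      (2 * c ^ 2) • (1 : Matrix (Fin 3) (Fin 3) ℝ) + (2 * s * c) • cross3 α := by
    ext i j
    fin_cases i <;> fin_cases j <;>
      simp [Ec, htr, rod, cross3, vecMulVec, Matrix.mul_apply, Fin.sum_univ_three,
        Matrix.vecHead, Matrix.vecTail, Matrix.transpose_apply,
        Matrix.one_apply, hc2, hs2] <;>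
      (first
        | ring1
        | linear_combination 2 * α 0 ^ 2 * hpy + (2 * c ^ 2 - 2) * hα
        | linear_combination 2 * α 1 ^ 2 * hpy + (2 * c ^ 2 - 2) * hα
        | linear_combination 2 * α 2 ^ 2 * hpy + (2 * c ^ 2 - 2) * hα
        | linear_combination 2 * α 0 * α 1 * hpy
        | linear_combination 2 * α 0 * α 2 * hpy
        | linear_combination 2 * α 1 * α 2 * hpy)
  have hcs : cross3 (s • α) = s • cross3 α := by
    ext i j
    fin_cases i <;> fin_cases j <;> simp [cross3] <;> ring
  rw [Emat, hsq, houter, hkey, hcs]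
  ext i j
  fin_cases i <;> fin_cases j <;>
    simp [Matrix.one_apply, cross3] <;> field_simp <;> ring
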